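/- Let X and Y be real Banach spaces and let β > 2γ > 0 and c, R > 0 be constants. Then there exist constants T > 0 and c_v > 0, depending only on β, γ, c and R, with the following property: for every t ∈ (0, T), every bounded linear map D : X → Y admitting a bounded linear right inverse Q : Y → X (i.e. D ∘ Q = id_Y) with operator norm ‖Q‖ ≤ c t^{−γ}, every map N from the closed ball of radius R around 0 in X to Y satisfying N(0) = 0 and ‖N(x) − N(x′)‖ ≤ c (‖x‖ + ‖x′‖) ‖x − x′‖ for all x, x′ in that ball, and every e ∈ Y with ‖e‖ ≤ c t^{β}, there exists x ∈ X with ‖x‖ ≤ c_v t^{β−γ} and D x + N(x) = e. -/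
import Mathlib

/-- Banach-space formulation of the perturbation theorem for coassociative
submanifolds (Theorem 3.3 of the paper). -/
theorem stmt0 (β γ c R : ℝ) (hγ : 0 < γ) (hβ : 2 * γ < β) (hc : 0 < c) (hR : 0 < R) :
    ∃ T > (0 : ℝ), ∃ cv > (0 : ℝ),
      ∀ (X : Type) (Y : Type)
        [NormedAddCommGroup X] [NormedSpace ℝ X] [CompleteSpace X]
        [NormedAddCommGroup Y] [NormedSpace ℝ Y] [CompleteSpace Y],
      ∀ t : ℝ, t ∈ Set.Ioo 0 T →
      ∀ (D : X →L[ℝ] Y) (Q : Y →L[ℝ] X),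
        D.comp Q = ContinuousLinearMap.id ℝ Y →
        ‖Q‖ ≤ c * t ^ (-γ) →
      ∀ N : X → Y, N 0 = 0 →
        (∀ x x' : X, x ∈ Metric.closedBall (0 : X) R → x' ∈ Metric.closedBall (0 : X) R →
          ‖N x - N x'‖ ≤ c * (‖x‖ + ‖x'‖) * ‖x - x'‖) →
      ∀ e : Y, ‖e‖ ≤ c * t ^ β →
        ∃ x : X, ‖x‖ ≤ cv * t ^ (β - γ) ∧ D x + N x = e := by
  have hβγ : (0:ℝ) < β - γ := by linarith
  have hβ2γ : (0:ℝ) < β - 2*γ := by linarith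
  refine ⟨min ((R / (2*c^2)) ^ (β-γ)⁻¹) ((1 / (8*c^4)) ^ (β-2*γ)⁻¹),
    lt_min (by positivity) (by positivity), 2*c^2, by positivity, ?_⟩
  intro X Y _ _ _ _ _ _ t ht D Q hDQ hQ N hN0 hNlip e he
  obtain ⟨ht0, htT⟩ := ht
  set r : ℝ := 2*c^2 * t ^ (β-γ) with hr
  have htβγ : (0:ℝ) < t ^ (β-γ) := Real.rpow_pos_of_pos ht0 _
  have htβ2γ : (0:ℝ) < t ^ (β-2*γ) := Real.rpow_pos_of_pos ht0 _
  have htγ : (0:ℝ) < t ^ (-γ) := Real.rpow_pos_of_pos ht0 _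
  have hrpos : 0 < r := by positivity
  have h1 : t ^ (β-γ) ≤ R / (2*c^2) := by
    calc t ^ (β-γ) ≤ ((R / (2*c^2)) ^ (β-γ)⁻¹) ^ (β-γ) :=
          Real.rpow_le_rpow ht0.le (htT.le.trans (min_le_left _ _)) hβγ.le
    _ = R / (2*c^2) := Real.rpow_inv_rpow (by positivity) (ne_of_gt hβγ)
  have hrR : r ≤ R := by
    rw [hr]
    calc 2*c^2 * t ^ (β-γ) ≤ 2*c^2 * (R / (2*c^2)) :=
          mul_le_mul_of_nonneg_left h1 (by positivity)
    _ = R := by field_simp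
  have h2 : t ^ (β-2*γ) ≤ 1 / (8*c^4) := by
    calc t ^ (β-2*γ) ≤ ((1 / (8*c^4)) ^ (β-2*γ)⁻¹) ^ (β-2*γ) :=
          Real.rpow_le_rpow ht0.le (htT.le.trans (min_le_right _ _)) hβ2γ.le
    _ = 1 / (8*c^4) := Real.rpow_inv_rpow (by positivity) (ne_of_gt hβ2γ)
  have hk : 4*c^4 * t ^ (β-2*γ) ≤ 1/2 := by
    calc 4*c^4 * t ^ (β-2*γ) ≤ 4*c^4 * (1 / (8*c^4)) :=
          mul_le_mul_of_nonneg_left h2 (by positivity)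
    _ = 1/2 := by field_simp; ring
  -- key multiplicative identities
  have hmul1 : t ^ (-γ) * t ^ (β-γ) = t ^ (β-2*γ) := by
    rw [← Real.rpow_add ht0]; ring_nf
  have hmul2 : t ^ (-γ) * t ^ β = t ^ (β-γ) := by
    rw [← Real.rpow_add ht0]; ring_nf
  -- norm of N on the small ball
  have hNx : ∀ x : X, x ∈ Metric.closedBall (0:X) r → ‖N x‖ ≤ c * r * ‖x‖ := by
    intro x hx
    have hxr : ‖x‖ ≤ r := by simpa [Metric.mem_closedBall, dist_eq_norm] using hx
    have hxR : x ∈ Metric.closedBall (0:X) R :=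
      Metric.closedBall_subset_closedBall hrR hx
    have h0R : (0:X) ∈ Metric.closedBall (0:X) R := Metric.mem_closedBall_self hR.le
    have := hNlip x 0 hxR h0R
    simp only [hN0, sub_zero, norm_zero, add_zero] at this
    calc ‖N x‖ ≤ c * ‖x‖ * ‖x‖ := this
    _ ≤ c * r * ‖x‖ := by nlinarith [mul_nonneg (mul_nonneg hc.le (sub_nonneg.mpr hxr)) (norm_nonneg x)]
  -- the subtype of the small ball
  have h0r : (0:X) ∈ Metric.closedBall (0:X) r := Metric.mem_closedBall_self hrpos.le
  haveI : Nonempty (Metric.closedBall (0:X) r) := ⟨⟨0, h0r⟩⟩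
  haveI : CompleteSpace (Metric.closedBall (0:X) r) :=
    Metric.isClosed_closedBall.completeSpace_coe
  -- bound on Q applied to N
  have hQN : ∀ x : X, ‖Q (N x)‖ ≤ (c * t ^ (-γ)) * ‖N x‖ := fun x =>
    (Q.le_opNorm _).trans (mul_le_mul_of_nonneg_right hQ (norm_nonneg _))
  have hk4 : (c * t ^ (-γ)) * (c * r) ≤ 1/4 := by
    have : (c * t ^ (-γ)) * (c * r) = 2*c^4 * (t ^ (-γ) * t ^ (β-γ)) := by rw [hr]; ring
    rw [this, hmul1]; nlinarith
  -- the map x ↦ Q (e - N x) sends the ball to itself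
  have hmem : ∀ x : X, x ∈ Metric.closedBall (0:X) r →
      Q (e - N x) ∈ Metric.closedBall (0:X) r := by
    intro x hx
    have hxr : ‖x‖ ≤ r := by simpa [Metric.mem_closedBall, dist_eq_norm] using hx
    have hQe : ‖Q e‖ ≤ (c * t ^ (-γ)) * (c * t ^ β) := by
      refine (Q.le_opNorm _).trans ?_
      exact mul_le_mul hQ he (norm_nonneg _) (by positivity)
    have h3 : ‖Q (e - N x)‖ ≤ ‖Q e‖ + ‖Q (N x)‖ := by
      calc ‖Q (e - N x)‖ = ‖Q e - Q (N x)‖ := by rw [map_sub]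
      _ ≤ ‖Q e‖ + ‖Q (N x)‖ := norm_sub_le _ _
    have h4 : ‖Q (N x)‖ ≤ (1/4) * r := by
      calc ‖Q (N x)‖ ≤ (c * t ^ (-γ)) * ‖N x‖ := hQN x
      _ ≤ (c * t ^ (-γ)) * (c * r * ‖x‖) :=
          mul_le_mul_of_nonneg_left (hNx x hx) (by positivity)
      _ = ((c * t ^ (-γ)) * (c * r)) * ‖x‖ := by ring
      _ ≤ (1/4) * r := mul_le_mul hk4 hxr (norm_nonneg _) (by norm_num)
    have h5 : (c * t ^ (-γ)) * (c * t ^ β) = (1/2) * r := by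
      rw [hr]; rw [show c * t ^ (-γ) * (c * t ^ β) = c^2 * (t ^ (-γ) * t ^ β) by ring,
        hmul2]; ring
    have : ‖Q (e - N x)‖ ≤ r := by
      calc ‖Q (e - N x)‖ ≤ ‖Q e‖ + ‖Q (N x)‖ := h3
      _ ≤ (1/2) * r + (1/4) * r := add_le_add (h5 ▸ hQe) h4
      _ ≤ r := by linarith
    simpa [Metric.mem_closedBall, dist_eq_norm] using this
  -- set up the contraction
  set F : Metric.closedBall (0:X) r → Metric.closedBall (0:X) r :=
    fun x => ⟨Q (e - N x), hmem x x.2⟩ with hF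
  have hlip : LipschitzWith (1/2 : NNReal) F := by
    apply LipschitzWith.of_dist_le_mul
    intro x y
    rw [Subtype.dist_eq, dist_eq_norm, Subtype.dist_eq, dist_eq_norm]
    have hxr : ‖(x:X)‖ ≤ r := mem_closedBall_zero_iff.mp x.2
    have hyr : ‖(y:X)‖ ≤ r := mem_closedBall_zero_iff.mp y.2
    have hxR : (x:X) ∈ Metric.closedBall (0:X) R :=
      Metric.closedBall_subset_closedBall hrR x.2
    have hyR : (y:X) ∈ Metric.closedBall (0:X) R :=
      Metric.closedBall_subset_closedBall hrR y.2
    have hNd : ‖N x - N y‖ ≤ c * (2*r) * ‖(x:X) - y‖ := by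
      calc ‖N x - N y‖ ≤ c * (‖(x:X)‖ + ‖(y:X)‖) * ‖(x:X) - y‖ := hNlip x y hxR hyR
      _ ≤ c * (2*r) * ‖(x:X) - y‖ := by
          apply mul_le_mul_of_nonneg_right _ (norm_nonneg _)
          apply mul_le_mul_of_nonneg_left _ hc.le
          linarith
    have hhalf : (c * t ^ (-γ)) * (c * (2*r)) ≤ 1/2 := by
      have heq : (c * t ^ (-γ)) * (c * (2*r)) = 4*c^4 * (t ^ (-γ) * t ^ (β-γ)) := by
        rw [hr]; ring
      rw [heq, hmul1]; linarith
    calc ‖(F x : X) - (F y : X)‖ = ‖Q (N y - N x)‖ := by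
          simp only [hF]
          rw [← map_sub]
          congr 1
          abel
    _ ≤ (c * t ^ (-γ)) * ‖N y - N x‖ :=
        (Q.le_opNorm _).trans (mul_le_mul_of_nonneg_right hQ (norm_nonneg _))
    _ ≤ (c * t ^ (-γ)) * (c * (2*r) * ‖(y:X) - x‖) := by
        apply mul_le_mul_of_nonneg_left _ (by positivity)
        exact hNlip y x hyR hxR |>.trans (by
          apply mul_le_mul_of_nonneg_right _ (norm_nonneg _)
          apply mul_le_mul_of_nonneg_left _ hc.le
          linarith)
    _ = ((c * t ^ (-γ)) * (c * (2*r))) * ‖(y:X) - x‖ := by ring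
    _ ≤ (1/2) * ‖(y:X) - x‖ :=
        mul_le_mul_of_nonneg_right hhalf (norm_nonneg _)
    _ = ((1/2 : NNReal) : ℝ) * ‖(x:X) - y‖ := by rw [norm_sub_rev]; norm_num
  have hcontr : ContractingWith (1/2 : NNReal) F := ⟨by exact_mod_cast one_half_lt_one, hlip⟩
  set x₀ := hcontr.fixedPoint F with hx₀
  have hfix : F x₀ = x₀ := hcontr.fixedPoint_isFixedPt
  have hval : Q (e - N x₀) = (x₀ : X) := congrArg Subtype.val hfix
  refine ⟨(x₀ : X), ?_, ?_⟩
  · exact mem_closedBall_zero_iff.mp x₀.2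
  · have hD : D (Q (e - N x₀)) = e - N x₀ := by
      have := ContinuousLinearMap.ext_iff.mp hDQ (e - N x₀)
      simpa using this
    rw [hval] at hD
    rw [hD]; abel
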